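/- arXiv:2111.12633 — 2 statements merged into one kernel-verified Lean document; each statement's English description precedes it below -/
import Mathlib

section
/- Let 0 < ε ≤ 1, m > 0, T > 0, and let P_{m,T} be the unique 2T-periodic solution of the switched system F(m,T). Define Δ(ε,m,T) = (1/(2T)) ∫₀^{2T} 2(m·cosh(P_{m,T}(s)) − m − ε) ds. Then for every solution (x₁, x₂) of the system Σ(ε,m,T) with x₁(0) > 0 and x₂(0) > 0, one has lim_{t→∞} (ln(x₁(t)) + ln(x₂(t)))/t = Δ(ε,m,T). -/
open Real Filter Set

/-- The `2T`-periodic square wave: `+1` on `[0,T)`, `-1` on `[T,2T)`. -/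
noncomputable def squareWave (T t : ℝ) : ℝ :=
  if Int.fract (t / (2 * T)) < 1 / 2 then 1 else -1

/-- A solution of the switched system `F(m,T)`: a continuous function satisfying
`dV/dt = 2(u(t) - m sinh V)` away from the switching times `nT`, `n ∈ ℤ`. -/
def IsSolF (m T : ℝ) (V : ℝ → ℝ) : Prop :=
  Continuous V ∧ ∀ t : ℝ, (∀ n : ℤ, t ≠ n * T) →
    HasDerivAt V (2 * (squareWave T t - m * Real.sinh (V t))) t

/-- The quantity `Δ(ε,m,T)` associated with the periodic solution `P` of `F(m,T)`. -/
noncomputable def DeltaP (ε m T : ℝ) (P : ℝ → ℝ) : ℝ :=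
  (1 / (2 * T)) * ∫ s in (0:ℝ)..(2 * T), 2 * (m * Real.cosh (P s) - m - ε)

/-- A solution of the planar switched linear system `Σ(ε,m,T)`. -/
def IsSolSigma (ε m T : ℝ) (x₁ x₂ : ℝ → ℝ) : Prop :=
  Continuous x₁ ∧ Continuous x₂ ∧ ∀ t : ℝ, (∀ n : ℤ, t ≠ n * T) →
    HasDerivAt x₁ ((squareWave T t - ε) * x₁ t + m * (x₂ t - x₁ t)) t ∧
    HasDerivAt x₂ ((-squareWave T t - ε) * x₂ t + m * (x₁ t - x₂ t)) t

open MeasureTheory intervalIntegral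

lemma sq_vals (T t : ℝ) : squareWave T t = 1 ∨ squareWave T t = -1 := by
  unfold squareWave; split <;> simp

lemma sqw_abs (T t : ℝ) : |squareWave T t| ≤ 1 := by
  rcases sq_vals T t with h | h <;> rw [h] <;> norm_num

lemma sq_meas (T : ℝ) : Measurable (squareWave T) := by
  unfold squareWave
  exact Measurable.ite (measurableSet_lt ((measurable_id.div_const (2*T)).fract)
    measurable_const) measurable_const measurable_const

lemma sq_intInt {T : ℝ} (c₁ c₂ : ℝ → ℝ) (h₁ : Continuous c₁) (h₂ : Continuous c₂) (a b : ℝ) :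
    IntervalIntegrable (fun t => c₁ t * squareWave T t + c₂ t) volume a b := by
  apply IntervalIntegrable.add _ (h₂.intervalIntegrable a b)
  have : (fun t => c₁ t * squareWave T t) = fun t => squareWave T t * c₁ t := by
    funext t; ring
  rw [this, intervalIntegrable_iff]
  exact Integrable.bdd_mul (c := 1) (intervalIntegrable_iff.1 (h₁.intervalIntegrable a b))
    ((sq_meas T).aestronglyMeasurable) (Filter.Eventually.of_forall fun t => by simpa using sqw_abs T t)

lemma sinh_key (a b : ℝ) : (a - b)^2 ≤ (a - b) * (Real.sinh a - Real.sinh b) := by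
  have main : ∀ u v : ℝ, v < u → (u - v)^2 ≤ (u - v) * (Real.sinh u - Real.sinh v) := by
    intro u v huv
    obtain ⟨c, _, hc⟩ := exists_hasDerivAt_eq_slope Real.sinh Real.cosh huv
      Real.continuous_sinh.continuousOn (fun x _ => Real.hasDerivAt_sinh x)
    rw [eq_div_iff (by linarith : u - v ≠ 0)] at hc
    have h1 : Real.sinh u - Real.sinh v = Real.cosh c * (u - v) := hc.symm
    have h2 := Real.one_le_cosh c
    nlinarith [sq_nonneg (u - v)]
  rcases lt_trichotomy a b with h | h | h
  · have := main b a h; nlinarith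
  · subst h; simp
  · exact main a b h

lemma cosh_lip {M a b : ℝ} (ha : |a| ≤ M) (hb : |b| ≤ M) :
    |Real.cosh a - Real.cosh b| ≤ Real.sinh M * |a - b| := by
  have main : ∀ u v : ℝ, v < u → |u| ≤ M → |v| ≤ M →
      |Real.cosh u - Real.cosh v| ≤ Real.sinh M * |u - v| := by
    intro u v huv hu hv
    obtain ⟨c, hcm, hc⟩ := exists_hasDerivAt_eq_slope Real.cosh Real.sinh huv
      Real.continuous_cosh.continuousOn (fun x _ => Real.hasDerivAt_cosh x)
    rw [eq_div_iff (by linarith : u - v ≠ 0)] at hc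
    have h1 : Real.cosh u - Real.cosh v = Real.sinh c * (u - v) := hc.symm
    have hcM : |c| ≤ M := by
      rw [abs_le] at hu hv ⊢
      exact ⟨le_of_lt (lt_of_le_of_lt hv.1 hcm.1), le_of_lt (lt_of_lt_of_le hcm.2 hu.2)⟩
    have h2 : |Real.sinh c| ≤ Real.sinh M := by
      rw [Real.abs_sinh]; exact Real.sinh_le_sinh.2 hcM
    rw [h1, abs_mul]
    exact mul_le_mul_of_nonneg_right h2 (abs_nonneg _)
  rcases lt_trichotomy a b with h | h | h
  · have := main b a h hb ha
    rw [abs_sub_comm (Real.cosh b), abs_sub_comm b a] at this; exact this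
  · subst h; simp
  · exact main a b h ha hb

lemma ftc_aux {T : ℝ} (hT : 0 < T) (f g : ℝ → ℝ)
    (hf : ContinuousOn f (Ici 0))
    (hd : ∀ t : ℝ, 0 < t → (∀ n : ℤ, t ≠ n * T) → HasDerivAt f (g t) t)
    (hgi : ∀ a b : ℝ, 0 ≤ a → 0 ≤ b → IntervalIntegrable g volume a b)
    {b : ℝ} (hb : 0 ≤ b) : ∫ s in (0:ℝ)..b, g s = f b - f 0 := by
  have key : ∀ k : ℕ, ∀ a c : ℝ, (k:ℝ) * T ≤ a → a ≤ c → c ≤ ((k:ℝ) + 1) * T →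
      ∫ s in a..c, g s = f c - f a := by
    intro k a c hka hac hck
    have ha0 : 0 ≤ a := le_trans (by positivity) hka
    refine integral_eq_sub_of_hasDeriv_right_of_le hac
      (hf.mono (fun x hx => le_trans ha0 hx.1)) (fun x hx => ?_) (hgi a c ha0 (ha0.trans hac))
    have hx0 : 0 < x := lt_of_le_of_lt ha0 hx.1
    refine (hd x hx0 (fun n hn => ?_)).hasDerivWithinAt
    have h1 : (k:ℝ) * T < (n:ℝ) * T := lt_of_le_of_lt hka (hn ▸ hx.1)
    have h2 : (n:ℝ) * T < ((k:ℝ) + 1) * T := lt_of_lt_of_le (hn ▸ hx.2) hck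
    have hk1 : (k:ℝ) < (n:ℝ) := by
      have := lt_of_mul_lt_mul_right h1 hT.le; exact_mod_cast this
    have hk2 : (n:ℝ) < (k:ℝ) + 1 := lt_of_mul_lt_mul_right h2 hT.le
    have hk1' : (k:ℤ) < n := by exact_mod_cast hk1
    have hk2' : n < (k:ℤ) + 1 := by exact_mod_cast hk2
    omega
  have main : ∀ n : ℕ, ∀ t : ℝ, 0 ≤ t → t ≤ (n:ℝ) * T → ∫ s in (0:ℝ)..t, g s = f t - f 0 := by
    intro n
    induction n with
    | zero => intro t ht0 ht1
              have : t = 0 := le_antisymm (by simpa using ht1) ht0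
              simp [this]
    | succ n ih =>
      intro t ht0 ht1
      by_cases h : t ≤ (n:ℝ) * T
      · exact ih t ht0 h
      push_neg at h
      have hnT : (0:ℝ) ≤ (n:ℝ) * T := by positivity
      have h1 := ih ((n:ℝ) * T) hnT le_rfl
      have h2 := key n ((n:ℝ) * T) t le_rfl h.le (by push_cast at ht1 ⊢; linarith)
      rw [← integral_add_adjacent_intervals (hgi 0 ((n:ℝ)*T) le_rfl hnT) (hgi ((n:ℝ)*T) t hnT ht0),
        h1, h2]
      ring
  obtain ⟨n, hn⟩ := exists_nat_ge (b / T)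
  exact main n b hb (by rwa [div_le_iff₀ hT] at hn)


set_option maxHeartbeats 1000000 in
theorem statement5 (ε m T : ℝ) (hε : 0 < ε) (hε1 : ε ≤ 1) (hm : 0 < m) (hT : 0 < T)
    (P : ℝ → ℝ) (hP : IsSolF m T P) (hPper : Function.Periodic P (2 * T))
    (x₁ x₂ : ℝ → ℝ) (hx : IsSolSigma ε m T x₁ x₂)
    (h₁ : 0 < x₁ 0) (h₂ : 0 < x₂ 0) :
    Filter.Tendsto (fun t => (Real.log (x₁ t) + Real.log (x₂ t)) / t)
      Filter.atTop (nhds (DeltaP ε m T P)) := by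
  obtain ⟨hc1, hc2, hds⟩ := hx
  obtain ⟨hPc, hPd⟩ := hP
  set C : ℝ := m + 2 with hC
  -- positivity of solutions
  have pos : ∀ t : ℝ, 0 ≤ t → 0 < x₁ t ∧ 0 < x₂ t := by
    by_contra hcon
    push_neg at hcon
    obtain ⟨t₁, ht₁0, ht₁⟩ := hcon
    set Z : Set ℝ := {t | 0 ≤ t ∧ (x₁ t ≤ 0 ∨ x₂ t ≤ 0)} with hZ
    have hZne : Z.Nonempty := by
      refine ⟨t₁, ht₁0, ?_⟩
      by_cases h : 0 < x₁ t₁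
      · exact Or.inr (ht₁ h)
      · exact Or.inl (not_lt.1 h)
    have hZclosed : IsClosed Z := by
      have : Z = Ici 0 ∩ (x₁ ⁻¹' Iic 0 ∪ x₂ ⁻¹' Iic 0) := by
        ext t; simp [hZ]
      rw [this]
      exact isClosed_Ici.inter ((isClosed_Iic.preimage hc1).union
        (isClosed_Iic.preimage hc2))
    have hZbdd : BddBelow Z := ⟨0, fun z hz => hz.1⟩
    set t₀ : ℝ := sInf Z with ht₀
    have ht₀Z : t₀ ∈ Z := hZclosed.csInf_mem hZne hZbdd
    have ht₀0 : 0 ≤ t₀ := ht₀Z.1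
    have hbefore : ∀ s, 0 ≤ s → s < t₀ → 0 < x₁ s ∧ 0 < x₂ s := by
      intro s hs0 hst
      by_contra hcon2
      have : s ∈ Z := by
        refine ⟨hs0, ?_⟩
        rcases not_and_or.1 hcon2 with h | h
        · exact Or.inl (not_lt.1 h)
        · exact Or.inr (not_lt.1 h)
      exact absurd (csInf_le hZbdd this) (not_le.2 hst)
    have hatt0 : 0 ≤ x₁ t₀ ∧ 0 ≤ x₂ t₀ := by
      rcases eq_or_lt_of_le ht₀0 with h0 | h0
      · exact ⟨le_of_lt (h0 ▸ h₁), le_of_lt (h0 ▸ h₂)⟩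
      constructor
      · refine ge_of_tendsto (hc1.continuousAt.continuousWithinAt :
          Filter.Tendsto x₁ (nhdsWithin t₀ (Iio t₀)) (nhds (x₁ t₀))) ?_
        filter_upwards [Ioo_mem_nhdsLT h0] with y hy
        exact (hbefore y hy.1.le hy.2).1.le
      · refine ge_of_tendsto (hc2.continuousAt.continuousWithinAt :
          Filter.Tendsto x₂ (nhdsWithin t₀ (Iio t₀)) (nhds (x₂ t₀))) ?_
        filter_upwards [Ioo_mem_nhdsLT h0] with y hy
        exact (hbefore y hy.1.le hy.2).2.le
    have hnonneg : ∀ s, s ∈ Icc (0:ℝ) t₀ → 0 ≤ x₁ s ∧ 0 ≤ x₂ s := by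
      intro s hs
      rcases lt_or_eq_of_le hs.2 with h | h
      · exact ⟨(hbefore s hs.1 h).1.le, (hbefore s hs.1 h).2.le⟩
      rw [h]; exact hatt0
    -- FTC for e^{Ct} x₁
    have hx1pos : 0 < x₁ t₀ := by
      have hftc := ftc_aux hT (fun t => Real.exp (C*t) * x₁ t)
        (fun t => Real.exp (C*t) * x₁ t * squareWave T t +
          Real.exp (C*t) * ((C - ε - m) * x₁ t + m * x₂ t))
        (((Real.continuous_exp.comp (continuous_const.mul continuous_id)).mul hc1).continuousOn)
        (fun t _ hnot => ?_) (fun a b _ _ => sq_intInt _ _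
          (((Real.continuous_exp.comp (continuous_const.mul continuous_id)).mul hc1))
          ((Real.continuous_exp.comp (continuous_const.mul continuous_id)).mul
            ((continuous_const.mul hc1).add (continuous_const.mul hc2))) a b) ht₀0
      · have hint_nonneg : 0 ≤ ∫ s in (0:ℝ)..t₀, (Real.exp (C*s) * x₁ s * squareWave T s +
            Real.exp (C*s) * ((C - ε - m) * x₁ s + m * x₂ s)) := by
          apply intervalIntegral.integral_nonneg ht₀0
          intro s hs
          have h1 := (hnonneg s hs).1
          have h2 := (hnonneg s hs).2
          have he := Real.exp_pos (C*s)
          rcases sq_vals T s with h | h <;> rw [h] <;> simp only [hC] <;>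
            nlinarith [mul_nonneg (mul_nonneg he.le h1) (by linarith : (0:ℝ) ≤ 2 - ε),
              mul_nonneg he.le h1, mul_nonneg (mul_nonneg he.le h2) hm.le,
              mul_nonneg (mul_nonneg he.le h1) (by linarith : (0:ℝ) ≤ 1 - ε)]
        rw [hftc] at hint_nonneg
        simp only [mul_zero, Real.exp_zero, one_mul] at hint_nonneg
        nlinarith [Real.exp_pos (C*t₀)]
      · have hd1 := (hds t hnot).1
        have hexp : HasDerivAt (fun t => Real.exp (C*t)) (Real.exp (C*t) * C) t := by
          simpa using ((hasDerivAt_id t).const_mul C).exp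
        have := hexp.mul hd1
        refine this.congr_deriv (Eq.symm ?_)
        ring
    have hx2pos : 0 < x₂ t₀ := by
      have hftc := ftc_aux hT (fun t => Real.exp (C*t) * x₂ t)
        (fun t => (-(Real.exp (C*t) * x₂ t)) * squareWave T t +
          Real.exp (C*t) * ((C - ε - m) * x₂ t + m * x₁ t))
        (((Real.continuous_exp.comp (continuous_const.mul continuous_id)).mul hc2).continuousOn)
        (fun t _ hnot => ?_) (fun a b _ _ => sq_intInt _ _
          (((Real.continuous_exp.comp (continuous_const.mul continuous_id)).mul hc2).neg)
          ((Real.continuous_exp.comp (continuous_const.mul continuous_id)).mul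
            ((continuous_const.mul hc2).add (continuous_const.mul hc1))) a b) ht₀0
      · have hint_nonneg : 0 ≤ ∫ s in (0:ℝ)..t₀, ((-(Real.exp (C*s) * x₂ s)) * squareWave T s +
            Real.exp (C*s) * ((C - ε - m) * x₂ s + m * x₁ s)) := by
          apply intervalIntegral.integral_nonneg ht₀0
          intro s hs
          have h1 := (hnonneg s hs).1
          have h2 := (hnonneg s hs).2
          have he := Real.exp_pos (C*s)
          rcases sq_vals T s with h | h <;> rw [h] <;> simp only [hC] <;>
            nlinarith [mul_nonneg (mul_nonneg he.le h2) (by linarith : (0:ℝ) ≤ 2 - ε),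
              mul_nonneg he.le h2, mul_nonneg (mul_nonneg he.le h1) hm.le,
              mul_nonneg (mul_nonneg he.le h2) (by linarith : (0:ℝ) ≤ 1 - ε)]
        rw [hftc] at hint_nonneg
        simp only [mul_zero, Real.exp_zero, one_mul] at hint_nonneg
        nlinarith [Real.exp_pos (C*t₀)]
      · have hd2 := (hds t hnot).2
        have hexp : HasDerivAt (fun t => Real.exp (C*t)) (Real.exp (C*t) * C) t := by
          simpa using ((hasDerivAt_id t).const_mul C).exp
        have := hexp.mul hd2
        refine this.congr_deriv (Eq.symm ?_)
        ring
    rcases ht₀Z.2 with h | h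
    · exact absurd hx1pos (not_lt.2 h)
    · exact absurd hx2pos (not_lt.2 h)
  have hp1 : ∀ t : ℝ, 0 ≤ t → 0 < x₁ t := fun t ht => (pos t ht).1
  have hp2 : ∀ t : ℝ, 0 ≤ t → 0 < x₂ t := fun t ht => (pos t ht).2
  set V : ℝ → ℝ := fun t => Real.log (x₁ t) - Real.log (x₂ t) with hVdef
  have hVc : ContinuousOn V (Ici 0) := by
    intro t ht
    exact (((Real.continuousAt_log (hp1 t ht).ne').comp hc1.continuousAt).sub
      ((Real.continuousAt_log (hp2 t ht).ne').comp hc2.continuousAt)).continuousWithinAt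
  have hVd : ∀ t : ℝ, 0 < t → (∀ n : ℤ, t ≠ n * T) →
      HasDerivAt V (2 * (squareWave T t - m * Real.sinh (V t))) t := by
    intro t ht hnot
    obtain ⟨hd1, hd2⟩ := hds t hnot
    have ha := hp1 t ht.le
    have hb := hp2 t ht.le
    have h := (hd1.log ha.ne').sub (hd2.log hb.ne')
    refine h.congr_deriv (Eq.symm ?_)
    have hsinh : Real.sinh (V t) = (x₁ t / x₂ t - x₂ t / x₁ t) / 2 := by
      simp only [hVdef]
      rw [Real.sinh_eq, Real.exp_sub, Real.exp_log ha, Real.exp_log hb, neg_sub,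
        Real.exp_sub, Real.exp_log hb, Real.exp_log ha]
    rw [hsinh]
    field_simp
    ring
  have hDd : ∀ t : ℝ, 0 < t → (∀ n : ℤ, t ≠ n * T) →
      HasDerivAt (fun s => V s - P s) (-(2*m) * (Real.sinh (V t) - Real.sinh (P t))) t := by
    intro t ht hnot
    have h := (hVd t ht hnot).sub (hPd t hnot)
    refine h.congr_deriv (Eq.symm ?_)
    ring
  have hexp4 : Continuous (fun s : ℝ => Real.exp (4*m*s)) :=
    Real.continuous_exp.comp (continuous_const.mul continuous_id)
  have hEmono : ∀ t : ℝ, 0 ≤ t →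
      Real.exp (4*m*t) * (V t - P t)^2 ≤ (V 0 - P 0)^2 := by
    intro t ht
    have hgEc : ContinuousOn (fun s => Real.exp (4*m*s) * (4*m) * (V s - P s)^2 +
        Real.exp (4*m*s) * (2 * (V s - P s) * (-(2*m) * (Real.sinh (V s) - Real.sinh (P s)))))
        (Ici 0) := by
      have hDc : ContinuousOn (fun s => V s - P s) (Ici 0) := hVc.sub hPc.continuousOn
      exact ((hexp4.continuousOn.mul continuousOn_const).mul (hDc.pow 2)).add
        (hexp4.continuousOn.mul ((continuousOn_const.mul hDc).mul
          (continuousOn_const.mul ((Real.continuous_sinh.comp_continuousOn hVc).sub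
            (Real.continuous_sinh.comp hPc).continuousOn))))
    have hEc : ContinuousOn (fun s => Real.exp (4*m*s) * (V s - P s)^2) (Ici 0) :=
      hexp4.continuousOn.mul ((hVc.sub hPc.continuousOn).pow 2)
    have hftc := ftc_aux hT (fun s => Real.exp (4*m*s) * (V s - P s)^2)
      (fun s => Real.exp (4*m*s) * (4*m) * (V s - P s)^2 +
        Real.exp (4*m*s) * (2 * (V s - P s) * (-(2*m) * (Real.sinh (V s) - Real.sinh (P s)))))
      hEc ?_ (fun a b ha hb => (hgEc.mono (fun x hx => ?_)).intervalIntegrable) ht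
    · have hint : (∫ s in (0:ℝ)..t, (Real.exp (4*m*s) * (4*m) * (V s - P s)^2 +
          Real.exp (4*m*s) * (2 * (V s - P s) * (-(2*m) * (Real.sinh (V s) - Real.sinh (P s))))))
          ≤ 0 := by
        have hneg : ∀ s : ℝ, Real.exp (4*m*s) * (4*m) * (V s - P s)^2 +
            Real.exp (4*m*s) * (2 * (V s - P s) * (-(2*m) * (Real.sinh (V s) - Real.sinh (P s))))
            ≤ 0 := by
          intro s
          nlinarith [mul_nonneg (by positivity : (0:ℝ) ≤ 4 * m * Real.exp (4*m*s))
            (sub_nonneg.2 (sinh_key (V s) (P s)))]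
        have h0 : 0 ≤ ∫ s in (0:ℝ)..t, -(Real.exp (4*m*s) * (4*m) * (V s - P s)^2 +
            Real.exp (4*m*s) * (2 * (V s - P s) *
              (-(2*m) * (Real.sinh (V s) - Real.sinh (P s))))) :=
          intervalIntegral.integral_nonneg ht (fun u _ => neg_nonneg.2 (hneg u))
        rw [intervalIntegral.integral_neg] at h0
        linarith
      rw [hftc] at hint
      simp only [mul_zero, Real.exp_zero, one_mul] at hint
      linarith
    · intro t' ht' hnot
      have h2 := (hDd t' ht' hnot).pow 2
      have hexp : HasDerivAt (fun s => Real.exp (4*m*s)) (Real.exp (4*m*t') * (4*m)) t' := by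
        simpa using ((hasDerivAt_id t').const_mul (4*m)).exp
      have := hexp.mul h2
      refine this.congr_deriv (Eq.symm ?_)
      push_cast [Pi.pow_apply]
      ring
    · rcases Set.mem_uIcc.1 hx with h | h
      · exact le_trans ha h.1
      · exact le_trans hb h.1
  have habsD : ∀ t : ℝ, 0 ≤ t → |V t - P t| ≤ |V 0 - P 0| * Real.exp (-(2*m)*t) := by
    intro t ht
    have h := hEmono t ht
    have hsq : (V t - P t)^2 ≤ (|V 0 - P 0| * Real.exp (-(2*m)*t))^2 := by
      have he : Real.exp (-(2*m)*t) ^ 2 = Real.exp (-(4*m*t)) := by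
        rw [pow_two, ← Real.exp_add]
        congr 1
        ring
      have h2 : (|V 0 - P 0| * Real.exp (-(2*m)*t))^2
          = (V 0 - P 0)^2 * Real.exp (-(4*m*t)) := by
        rw [mul_pow, sq_abs, he]
      rw [h2]
      have h3 : (V t - P t)^2 = Real.exp (-(4*m*t)) * (Real.exp (4*m*t) * (V t - P t)^2) := by
        rw [← mul_assoc, ← Real.exp_add]
        simp
      rw [h3]
      calc Real.exp (-(4*m*t)) * (Real.exp (4*m*t) * (V t - P t)^2)
          ≤ Real.exp (-(4*m*t)) * (V 0 - P 0)^2 :=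
            mul_le_mul_of_nonneg_left h (Real.exp_nonneg _)
        _ = (V 0 - P 0)^2 * Real.exp (-(4*m*t)) := by ring
    have h4 := Real.sqrt_le_sqrt hsq
    rw [Real.sqrt_sq_eq_abs, Real.sqrt_sq (by positivity)] at h4
    exact h4
  obtain ⟨MP, hMP⟩ := (isCompact_Icc : IsCompact (Icc (0:ℝ) (2*T))).exists_bound_of_continuousOn
    hPc.continuousOn
  have h2T : (0:ℝ) < 2*T := by linarith
  have hMPglob : ∀ s : ℝ, |P s| ≤ MP := by
    intro s
    have h1 : P s = P (s - (⌊s / (2*T)⌋ : ℤ) * (2*T)) := (hPper.sub_int_mul_eq ⌊s / (2*T)⌋).symm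
    have h3 : ((⌊s / (2*T)⌋ : ℤ) : ℝ) * (2*T) ≤ s := by
      rw [← le_div_iff₀ h2T]
      exact Int.floor_le _
    have h4 : s / (2*T) < (⌊s / (2*T)⌋ : ℤ) + 1 := Int.lt_floor_add_one _
    have h5 : s < (((⌊s / (2*T)⌋ : ℤ) : ℝ) + 1) * (2*T) := by
      rw [← div_lt_iff₀ h2T]
      exact_mod_cast h4
    have hmem : s - ((⌊s / (2*T)⌋ : ℤ) : ℝ) * (2*T) ∈ Icc (0:ℝ) (2*T) :=
      ⟨by linarith, by linarith⟩
    rw [h1]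
    simpa using hMP _ hmem
  have hMP0 : 0 ≤ MP := le_trans (abs_nonneg _) (hMPglob 0)
  set M : ℝ := MP + |V 0 - P 0| with hMdef
  have hM0 : 0 ≤ M := by positivity
  have hexple1 : ∀ t : ℝ, 0 ≤ t → Real.exp (-(2*m)*t) ≤ 1 := by
    intro t ht
    apply Real.exp_le_one_iff.2
    nlinarith
  have hMV : ∀ t : ℝ, 0 ≤ t → |V t| ≤ M := by
    intro t ht
    have h1 : |V t| ≤ |V t - P t| + |P t| := by
      calc |V t| = |(V t - P t) + P t| := by ring_nf
        _ ≤ |V t - P t| + |P t| := abs_add_le _ _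
    have h2 := habsD t ht
    have h3 := hMPglob t
    have h4 : |V 0 - P 0| * Real.exp (-(2*m)*t) ≤ |V 0 - P 0| * 1 :=
      mul_le_mul_of_nonneg_left (hexple1 t ht) (abs_nonneg _)
    simp only [hMdef]
    linarith
  set Delta : ℝ := DeltaP ε m T P with hDelta
  set fP : ℝ → ℝ := fun s => 2 * (m * Real.cosh (P s) - m - ε) with hfPdef
  have hfPc : Continuous fP := by
    apply continuous_const.mul
    exact ((continuous_const.mul (Real.continuous_cosh.comp hPc)).sub continuous_const).sub
      continuous_const
  have hfPper : Function.Periodic fP (2*T) := by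
    intro s
    simp only [hfPdef, hPper s]
  have hgLc : ContinuousOn (fun s => 2 * (m * Real.cosh (V s) - m - ε)) (Ici 0) := by
    apply continuousOn_const.mul
    exact ((continuousOn_const.mul (Real.continuous_cosh.comp_continuousOn hVc)).sub
      continuousOn_const).sub continuousOn_const
  have hL : ∀ t : ℝ, 0 ≤ t →
      (Real.log (x₁ t) + Real.log (x₂ t)) - (Real.log (x₁ 0) + Real.log (x₂ 0))
        = ∫ s in (0:ℝ)..t, 2 * (m * Real.cosh (V s) - m - ε) := by
    intro t ht
    refine (ftc_aux hT (fun t => Real.log (x₁ t) + Real.log (x₂ t))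
      (fun s => 2 * (m * Real.cosh (V s) - m - ε)) ?_ ?_
      (fun a b ha hb => (hgLc.mono (fun x hx => ?_)).intervalIntegrable) ht).symm
    · intro t' ht'
      exact (((Real.continuousAt_log (hp1 t' ht').ne').comp hc1.continuousAt).add
        ((Real.continuousAt_log (hp2 t' ht').ne').comp hc2.continuousAt)).continuousWithinAt
    · intro t' ht' hnot
      obtain ⟨hd1, hd2⟩ := hds t' hnot
      have ha := hp1 t' ht'.le
      have hb := hp2 t' ht'.le
      have h := (hd1.log ha.ne').add (hd2.log hb.ne')
      refine h.congr_deriv (Eq.symm ?_)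
      have hcosh : Real.cosh (V t') = (x₁ t' / x₂ t' + x₂ t' / x₁ t') / 2 := by
        simp only [hVdef]
        rw [Real.cosh_eq, Real.exp_sub, Real.exp_log ha, Real.exp_log hb, neg_sub,
          Real.exp_sub, Real.exp_log hb, Real.exp_log ha]
      show 2 * (m * Real.cosh (V t') - m - ε) = _
      rw [hcosh]
      field_simp
      ring
    · rcases Set.mem_uIcc.1 hx with h | h
      · exact le_trans ha h.1
      · exact le_trans hb h.1
  have hfPint : ∀ a b : ℝ, IntervalIntegrable fP volume a b := fun a b =>
    hfPc.intervalIntegrable a b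
  set I : ℝ := ∫ s in (0:ℝ)..(2*T), fP s with hIdef
  have hDeltaI : Delta = 1/(2*T) * I := rfl
  set MfP : ℝ := 2 * (m * Real.cosh MP + m + ε) with hMfPdef
  have hMfP0 : 0 ≤ MfP := by
    have := Real.cosh_pos (x := MP)
    simp only [hMfPdef]
    nlinarith
  have hfPbound : ∀ s : ℝ, |fP s| ≤ MfP := by
    intro s
    have hcc : Real.cosh (P s) ≤ Real.cosh MP := by
      apply Real.cosh_le_cosh.2
      rw [abs_of_nonneg hMP0]
      exact hMPglob s
    have hc0 := Real.cosh_pos (x := P s)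
    simp only [hfPdef, hMfPdef]
    rw [abs_le]
    constructor <;> nlinarith
  have hper_bound : ∀ t : ℝ, 0 ≤ t →
      |(∫ s in (0:ℝ)..t, fP s) - Delta * t| ≤ MfP * (2*T) + |I| := by
    intro t ht
    set n : ℤ := ⌊t / (2*T)⌋ with hndef
    have hn1 : (n:ℝ) * (2*T) ≤ t := by
      rw [← le_div_iff₀ h2T]
      exact Int.floor_le _
    have hn2 : t < ((n:ℝ) + 1) * (2*T) := by
      rw [← div_lt_iff₀ h2T]
      have h := Int.lt_floor_add_one (t/(2*T))
      rw [← hndef] at h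
      exact_mod_cast h
    have hsplit : ∫ s in (0:ℝ)..t, fP s
        = (∫ s in (0:ℝ)..(n:ℝ)*(2*T), fP s) + ∫ s in (n:ℝ)*(2*T)..t, fP s :=
      (intervalIntegral.integral_add_adjacent_intervals (hfPint _ _) (hfPint _ _)).symm
    have hper : (∫ s in (0:ℝ)..(n:ℝ)*(2*T), fP s) = (n:ℝ) * I := by
      have h := hfPper.intervalIntegral_add_zsmul_eq n 0 hfPint
      simp only [zero_add, zsmul_eq_mul] at h
      exact h
    have hrem : |∫ s in (n:ℝ)*(2*T)..t, fP s| ≤ MfP * (2*T) := by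
      have h := intervalIntegral.norm_integral_le_of_norm_le_const
        (C := MfP) (a := (n:ℝ)*(2*T)) (b := t) (f := fP)
        (fun x _ => by simpa using hfPbound x)
      rw [Real.norm_eq_abs] at h
      calc |∫ s in (n:ℝ)*(2*T)..t, fP s| ≤ MfP * |t - (n:ℝ)*(2*T)| := h
        _ ≤ MfP * (2*T) := by
            rw [abs_of_nonneg (by linarith)]
            apply mul_le_mul_of_nonneg_left _ hMfP0
            linarith
    have habs2 : |Delta * t - (n:ℝ) * I| ≤ |I| := by
      have heq : Delta * t - (n:ℝ) * I = I * (t/(2*T) - (n:ℝ)) := by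
        rw [hDeltaI]
        field_simp
      rw [heq, abs_mul]
      have h3 : |t/(2*T) - (n:ℝ)| ≤ 1 := by
        rw [abs_le]
        constructor
        · have : (n:ℝ) ≤ t / (2*T) := by
            rw [le_div_iff₀ h2T]
            exact hn1
          linarith
        · have : t / (2*T) < (n:ℝ) + 1 := by
            rw [div_lt_iff₀ h2T]
            exact hn2
          linarith
      calc |I| * |t/(2*T) - (n:ℝ)| ≤ |I| * 1 := mul_le_mul_of_nonneg_left h3 (abs_nonneg I)
        _ = |I| := mul_one _
    rw [hsplit, hper]
    have htr : |((n:ℝ) * I + ∫ s in (n:ℝ)*(2*T)..t, fP s) - Delta * t|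
        ≤ |∫ s in (n:ℝ)*(2*T)..t, fP s| + |Delta * t - (n:ℝ) * I| := by
      have heq2 : ((n:ℝ) * I + ∫ s in (n:ℝ)*(2*T)..t, fP s) - Delta * t
          = (∫ s in (n:ℝ)*(2*T)..t, fP s) + -(Delta * t - (n:ℝ) * I) := by ring
      rw [heq2]
      calc |(∫ s in (n:ℝ)*(2*T)..t, fP s) + -(Delta * t - (n:ℝ) * I)|
          ≤ |∫ s in (n:ℝ)*(2*T)..t, fP s| + |-(Delta * t - (n:ℝ) * I)| := abs_add_le _ _
        _ = |∫ s in (n:ℝ)*(2*T)..t, fP s| + |Delta * t - (n:ℝ) * I| := by rw [abs_neg]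
    linarith
  have hsinhM0 : 0 ≤ Real.sinh M := Real.sinh_nonneg_iff.2 hM0
  have hsub : ∀ t : ℝ, 0 ≤ t → uIcc (0:ℝ) t ⊆ Ici 0 := by
    intro t ht x hx
    rcases Set.mem_uIcc.1 hx with h | h
    · exact h.1
    · exact le_trans ht h.1
  have hgap : ∀ t : ℝ, 0 ≤ t →
      |(∫ s in (0:ℝ)..t, 2 * (m * Real.cosh (V s) - m - ε)) - ∫ s in (0:ℝ)..t, fP s|
        ≤ Real.sinh M * |V 0 - P 0| := by
    intro t ht
    set K : ℝ := 2*m*Real.sinh M * |V 0 - P 0| with hKdef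
    have hK0 : 0 ≤ K := by positivity
    have hgLint : IntervalIntegrable (fun s => 2 * (m * Real.cosh (V s) - m - ε)) volume 0 t :=
      (hgLc.mono (hsub t ht)).intervalIntegrable
    have hdiff : (∫ s in (0:ℝ)..t, 2 * (m * Real.cosh (V s) - m - ε))
        - (∫ s in (0:ℝ)..t, fP s)
        = ∫ s in (0:ℝ)..t, (2 * (m * Real.cosh (V s) - m - ε) - fP s) :=
      (intervalIntegral.integral_sub hgLint (hfPint 0 t)).symm
    have habs := intervalIntegral.abs_integral_le_integral_abs (μ := volume) (a := (0:ℝ)) (b := t)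
      (f := fun s => 2 * (m * Real.cosh (V s) - m - ε) - fP s) ht
    have hptw : ∀ s ∈ Icc (0:ℝ) t,
        |2 * (m * Real.cosh (V s) - m - ε) - fP s| ≤ K * Real.exp (-(2*m)*s) := by
      intro s hs
      have hVM := hMV s hs.1
      have hPM : |P s| ≤ M := by
        have hg := hMPglob s
        simp only [hMdef]
        have := abs_nonneg (V 0 - P 0)
        linarith
      have hlips := cosh_lip hVM hPM
      have heq1 : 2 * (m * Real.cosh (V s) - m - ε) - fP s
          = 2 * m * (Real.cosh (V s) - Real.cosh (P s)) := by
        simp only [hfPdef]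
        ring
      rw [heq1, abs_mul, abs_of_nonneg (by positivity : (0:ℝ) ≤ 2*m)]
      have hDs := habsD s hs.1
      calc 2*m * |Real.cosh (V s) - Real.cosh (P s)|
          ≤ 2*m * (Real.sinh M * |V s - P s|) :=
            mul_le_mul_of_nonneg_left hlips (by positivity)
        _ ≤ 2*m * (Real.sinh M * (|V 0 - P 0| * Real.exp (-(2*m)*s))) := by
            apply mul_le_mul_of_nonneg_left _ (by positivity : (0:ℝ) ≤ 2*m)
            exact mul_le_mul_of_nonneg_left hDs hsinhM0
        _ = K * Real.exp (-(2*m)*s) := by rw [hKdef]; ring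
    have hintabs : IntervalIntegrable
        (fun s => |2 * (m * Real.cosh (V s) - m - ε) - fP s|) volume 0 t :=
      (((hgLc.mono (hsub t ht)).sub hfPc.continuousOn).abs).intervalIntegrable
    have hintK : IntervalIntegrable (fun s => K * Real.exp (-(2*m)*s)) volume 0 t :=
      (continuous_const.mul (Real.continuous_exp.comp
        (continuous_const.mul continuous_id))).intervalIntegrable 0 t
    have hmono := intervalIntegral.integral_mono_on ht hintabs hintK hptw
    have hexpint : (∫ s in (0:ℝ)..t, K * Real.exp (-(2*m)*s))
        = -(K/(2*m)) * Real.exp (-(2*m)*t) - (-(K/(2*m)) * Real.exp (-(2*m)*0)) := by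
      apply intervalIntegral.integral_eq_sub_of_hasDerivAt
      · intro x _
        have h := (((hasDerivAt_id x).const_mul (-(2*m))).exp).const_mul (-(K/(2*m)))
        refine h.congr_deriv (Eq.symm ?_)
        simp only [id_eq]
        field_simp
      · exact hintK
    have hfin : (∫ s in (0:ℝ)..t, K * Real.exp (-(2*m)*s)) ≤ Real.sinh M * |V 0 - P 0| := by
      rw [hexpint]
      have he1 : 0 ≤ Real.exp (-(2*m)*t) := Real.exp_nonneg _
      have he2 : Real.exp (-(2*m)*(0:ℝ)) = 1 := by norm_num
      rw [he2]
      have hKm : K/(2*m) = Real.sinh M * |V 0 - P 0| := by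
        rw [hKdef]
        field_simp
      have hstep : -(K/(2*m)) * Real.exp (-(2*m)*t) ≤ 0 := by
        apply mul_nonpos_of_nonpos_of_nonneg _ he1
        simp only [neg_nonpos]
        positivity
      linarith [hKm ▸ hstep, hKm.symm.le]
    rw [hdiff]
    calc |∫ s in (0:ℝ)..t, (2 * (m * Real.cosh (V s) - m - ε) - fP s)|
        ≤ ∫ s in (0:ℝ)..t, |2 * (m * Real.cosh (V s) - m - ε) - fP s| := habs
      _ ≤ ∫ s in (0:ℝ)..t, K * Real.exp (-(2*m)*s) := hmono
      _ ≤ Real.sinh M * |V 0 - P 0| := hfin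
  set B : ℝ := |Real.log (x₁ 0) + Real.log (x₂ 0)| + Real.sinh M * |V 0 - P 0|
    + (MfP * (2*T) + |I|) with hBdef
  have hB : ∀ t : ℝ, 0 ≤ t →
      |(Real.log (x₁ t) + Real.log (x₂ t)) - Delta * t| ≤ B := by
    intro t ht
    have h1 := hL t ht
    have h2 := hgap t ht
    have h3 := hper_bound t ht
    have heq : (Real.log (x₁ t) + Real.log (x₂ t)) - Delta * t
        = (Real.log (x₁ 0) + Real.log (x₂ 0))
          + ((∫ s in (0:ℝ)..t, 2 * (m * Real.cosh (V s) - m - ε)) - ∫ s in (0:ℝ)..t, fP s)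
          + ((∫ s in (0:ℝ)..t, fP s) - Delta * t) := by
      linarith
    rw [heq]
    have ht1 : |(Real.log (x₁ 0) + Real.log (x₂ 0))
          + ((∫ s in (0:ℝ)..t, 2 * (m * Real.cosh (V s) - m - ε)) - ∫ s in (0:ℝ)..t, fP s)
          + ((∫ s in (0:ℝ)..t, fP s) - Delta * t)|
        ≤ |(Real.log (x₁ 0) + Real.log (x₂ 0))
          + ((∫ s in (0:ℝ)..t, 2 * (m * Real.cosh (V s) - m - ε)) - ∫ s in (0:ℝ)..t, fP s)|
          + |(∫ s in (0:ℝ)..t, fP s) - Delta * t| := abs_add_le _ _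
    have ht2 : |(Real.log (x₁ 0) + Real.log (x₂ 0))
          + ((∫ s in (0:ℝ)..t, 2 * (m * Real.cosh (V s) - m - ε)) - ∫ s in (0:ℝ)..t, fP s)|
        ≤ |Real.log (x₁ 0) + Real.log (x₂ 0)|
          + |(∫ s in (0:ℝ)..t, 2 * (m * Real.cosh (V s) - m - ε)) - ∫ s in (0:ℝ)..t, fP s| :=
      abs_add_le _ _
    simp only [hBdef]
    linarith
  have htend0 : Filter.Tendsto (fun t : ℝ => B / t) Filter.atTop (nhds 0) :=
    tendsto_const_nhds.div_atTop Filter.tendsto_id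
  have hmain : Filter.Tendsto
      (fun t => (Real.log (x₁ t) + Real.log (x₂ t)) / t - Delta) Filter.atTop (nhds 0) := by
    apply squeeze_zero_norm' _ htend0
    filter_upwards [Filter.eventually_ge_atTop (1:ℝ)] with t ht1
    have ht0 : (0:ℝ) < t := by linarith
    rw [Real.norm_eq_abs]
    have heq : (Real.log (x₁ t) + Real.log (x₂ t)) / t - Delta
        = ((Real.log (x₁ t) + Real.log (x₂ t)) - Delta * t) / t := by
      field_simp
    rw [heq, abs_div, abs_of_pos ht0]
    gcongr
    exact hB t ht0.le
  have hfinal := hmain.add (tendsto_const_nhds (x := Delta))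
  simp only [sub_add_cancel, zero_add] at hfinal
  exact hfinal
end

section
/- Let 0 < ε < 1. There exists a threshold T** > 0 (depending only on ε) such that for every 0 < T < T** and every m > 0, one has Δ(ε,m,T) < 0. -/
open Real Filter Set

lemma squareWave_le_one (T t : ℝ) : squareWave T t ≤ 1 := by
  unfold squareWave; split <;> norm_num

lemma neg_one_le_squareWave (T t : ℝ) : -1 ≤ squareWave T t := by
  unfold squareWave; split <;> norm_num

lemma squareWave_pos {T t : ℝ} (hT : 0 < T) (h : t ∈ Ioo 0 T) : squareWave T t = 1 := by
  have h2T : 0 < 2 * T := by linarith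
  have hfr : Int.fract (t / (2 * T)) = t / (2 * T) :=
    Int.fract_eq_self.2 ⟨div_nonneg (le_of_lt (by linarith [h.1])) h2T.le, by rw [div_lt_one h2T]; linarith [h.2]⟩
  have : t / (2 * T) < 1 / 2 := by
    rw [div_lt_div_iff₀ h2T (by norm_num)]; linarith [h.2]
  unfold squareWave; rw [hfr, if_pos this]

lemma squareWave_neg {T t : ℝ} (hT : 0 < T) (h : t ∈ Ioo T (2 * T)) : squareWave T t = -1 := by
  have h2T : 0 < 2 * T := by linarith
  have hfr : Int.fract (t / (2 * T)) = t / (2 * T) :=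
    Int.fract_eq_self.2 ⟨div_nonneg (le_of_lt (by linarith [h.1])) h2T.le, by rw [div_lt_one h2T]; linarith [h.2]⟩
  have : ¬ (t / (2 * T) < 1 / 2) := by
    rw [not_lt, div_le_div_iff₀ (by norm_num) h2T]; linarith [h.1]
  unfold squareWave; rw [hfr, if_neg this]

/-- cosh x - 1 ≤ x * sinh x -/
lemma cosh_sub_one_le (x : ℝ) : Real.cosh x - 1 ≤ x * Real.sinh x := by
  have key : ∀ y : ℝ, 0 ≤ y → Real.cosh y - 1 ≤ y * Real.sinh y := by
    intro y hy
    rcases eq_or_lt_of_le hy with h | h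
    · simp [← h]
    · obtain ⟨c, hc, hceq⟩ := exists_hasDerivAt_eq_slope Real.cosh Real.sinh h
        Real.continuous_cosh.continuousOn (fun z _ => Real.hasDerivAt_cosh z)
      rw [Real.cosh_zero, sub_zero] at hceq
      have : Real.cosh y - 1 = y * Real.sinh c := by
        field_simp at hceq; linarith [hceq]
      rw [this]
      have := Real.sinh_le_sinh.2 hc.2.le
      nlinarith [h]
  rcases le_or_gt 0 x with h | h
  · exact key x h
  · have := key (-x) (by linarith)
    rw [Real.cosh_neg, Real.sinh_neg] at this
    nlinarith [this]

section Glue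
variable {T : ℝ} {f g : ℝ → ℝ}

lemma mono_piece (hf : Continuous f)
    (hd : ∀ t, (∀ n : ℤ, t ≠ n * T) → HasDerivAt f (g t) t)
    (hg : ∀ t, 0 ≤ g t) {x y : ℝ}
    (hno : ∀ n : ℤ, (n : ℝ) * T ∉ Ioo x y) : MonotoneOn f (Icc x y) := by
  apply monotoneOn_of_hasDerivWithinAt_nonneg (convex_Icc x y) hf.continuousOn
  · intro t ht
    rw [interior_Icc] at ht
    refine (hd t fun n hn => hno n ?_).hasDerivWithinAt
    rw [← hn]; exact ht
  · intro t _; exact hg t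

lemma mono_window (hT : 0 < T) (hf : Continuous f)
    (hd : ∀ t, (∀ n : ℤ, t ≠ n * T) → HasDerivAt f (g t) t)
    (hg : ∀ t, 0 ≤ g t) {x y : ℝ} (hxy : x ≤ y) (hw : y ≤ x + T) : f x ≤ f y := by
  set n : ℤ := ⌊x / T⌋ + 1 with hn
  have hxw : x < (n : ℝ) * T := by
    have h1 : x / T < (n : ℝ) := by push_cast [hn]; exact Int.lt_floor_add_one (x / T)
    calc x = x / T * T := by field_simp
    _ < (n : ℝ) * T := by exact mul_lt_mul_of_pos_right h1 hT
  have hmulgt : ∀ k : ℤ, x < (k : ℝ) * T → (n : ℝ) * T ≤ (k : ℝ) * T := by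
    intro k hk
    have : (⌊x / T⌋ : ℝ) < (k : ℝ) := by
      have : x / T < (k : ℝ) := by rwa [div_lt_iff₀ hT]
      exact lt_of_le_of_lt (Int.floor_le _) this
    have : n ≤ k := by exact_mod_cast (by push_cast [hn] at this ⊢; exact_mod_cast Int.lt_iff_add_one_le.1 (by exact_mod_cast this))
    exact mul_le_mul_of_nonneg_right (by exact_mod_cast this) hT.le
  rcases le_or_gt y ((n : ℝ) * T) with hyw | hyw
  · have hno : ∀ k : ℤ, (k : ℝ) * T ∉ Ioo x y := by
      intro k hk
      exact absurd (lt_of_lt_of_le hk.2 hyw) (not_lt.2 (hmulgt k hk.1))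
    exact mono_piece hf hd hg hno ⟨le_refl x, hxy⟩ ⟨hxy, le_refl y⟩ hxy
  · have h1 : f x ≤ f ((n : ℝ) * T) := by
      have hno : ∀ k : ℤ, (k : ℝ) * T ∉ Ioo x ((n : ℝ) * T) := fun k hk =>
        absurd hk.2 (not_lt.2 (hmulgt k hk.1))
      exact mono_piece hf hd hg hno ⟨le_refl x, hxw.le⟩ ⟨hxw.le, le_refl _⟩ hxw.le
    have h2 : f ((n : ℝ) * T) ≤ f y := by
      have hno : ∀ k : ℤ, (k : ℝ) * T ∉ Ioo ((n : ℝ) * T) y := by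
        intro k hk
        have hk1 : n < k := by
          have := hk.1
          have : (n : ℝ) < (k : ℝ) := by
            by_contra hc
            push_neg at hc
            exact absurd (mul_le_mul_of_nonneg_right hc hT.le) (not_le.2 hk.1)
          exact_mod_cast this
        have : ((n : ℝ) + 1) * T ≤ (k : ℝ) * T := by
          apply mul_le_mul_of_nonneg_right _ hT.le
          have : (n + 1 : ℤ) ≤ k := hk1
          exact_mod_cast this
        nlinarith [hk.2, hxw]
      exact mono_piece hf hd hg hno ⟨le_refl _, hyw.le⟩ ⟨hyw.le, le_refl _⟩ hyw.le
    linarith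

lemma monotone_glue (hT : 0 < T) (hf : Continuous f)
    (hd : ∀ t, (∀ n : ℤ, t ≠ n * T) → HasDerivAt f (g t) t)
    (hg : ∀ t, 0 ≤ g t) : Monotone f := by
  have key : ∀ k : ℕ, ∀ x y : ℝ, x ≤ y → y ≤ x + k * T → f x ≤ f y := by
    intro k
    induction k with
    | zero =>
      intro x y h1 h2
      push_cast at h2
      have : x = y := le_antisymm h1 (by linarith)
      rw [this]
    | succ k ih =>
      intro x y h1 h2
      rcases le_or_gt y (x + T) with h | h
      · exact mono_window hT hf hd hg h1 h
      · calc f x ≤ f (x + T) := mono_window hT hf hd hg (by linarith) le_rfl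
          _ ≤ f y := ih (x + T) y (by linarith) (by push_cast at h2 ⊢; linarith)
  intro x y hxy
  obtain ⟨k, hk⟩ := exists_nat_ge ((y - x) / T)
  refine key k x y hxy ?_
  rw [div_le_iff₀ hT] at hk
  linarith

end Glue

lemma no_max_of_deriv_neg_near {T : ℝ} {f g : ℝ → ℝ} (hT : 0 < T) (hf : Continuous f)
    (hd : ∀ t, (∀ n : ℤ, t ≠ n * T) → HasDerivAt f (g t) t)
    {c : ℝ} (hmax : ∀ t, f t ≤ f c)
    (hneg : ∀ᶠ t in nhds c, g t < 0) : False := by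
  obtain ⟨δ, hδ, hδneg⟩ := Metric.eventually_nhds_iff.1 hneg
  set n : ℤ := ⌈c / T⌉ - 1 with hn
  set l : ℝ := (n : ℝ) * T with hl
  have hlc : l < c := by
    have h1 : (n : ℝ) < c / T := by
      push_cast [hn]
      linarith [Int.ceil_lt_add_one (c / T)]
    calc l = (n : ℝ) * T := rfl
    _ < (c / T) * T := mul_lt_mul_of_pos_right h1 hT
    _ = c := by field_simp
  set δ' : ℝ := min (δ / 2) ((c - l) / 2) with hδ'
  have hδ'pos : 0 < δ' := lt_min (by linarith) (by linarith)
  set a : ℝ := c - δ' with ha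
  have hac : a < c := by simp [ha]; linarith
  have hal : l < a := by
    have : δ' ≤ (c - l) / 2 := min_le_right _ _
    simp only [ha]; linarith
  have hno : ∀ k : ℤ, (k : ℝ) * T ∉ Ioo a c := by
    intro k hk
    have hkl : l < (k : ℝ) * T := lt_trans hal hk.1
    have hkn : n < k := by
      by_contra hc'
      push_neg at hc'
      have : (k : ℝ) * T ≤ l := mul_le_mul_of_nonneg_right (by exact_mod_cast hc') hT.le
      linarith
    have hkc : (⌈c / T⌉ : ℤ) ≤ k := by omega
    have : c ≤ (k : ℝ) * T := by
      calc c = (c / T) * T := by field_simp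
      _ ≤ (⌈c / T⌉ : ℝ) * T := mul_le_mul_of_nonneg_right (Int.le_ceil _) hT.le
      _ ≤ (k : ℝ) * T := mul_le_mul_of_nonneg_right (by exact_mod_cast hkc) hT.le
    linarith [hk.2]
  have hanti : StrictAntiOn f (Icc a c) := by
    apply strictAntiOn_of_deriv_neg (convex_Icc a c) hf.continuousOn
    intro t ht
    rw [interior_Icc] at ht
    have hder : HasDerivAt f (g t) t := hd t (fun k hk => hno k (hk ▸ ht))
    rw [hder.deriv]
    apply hδneg
    rw [Real.dist_eq, abs_lt]
    constructor
    · have : δ' ≤ δ / 2 := min_le_left _ _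
      have := ht.1; simp only [ha] at this; linarith
    · linarith [ht.2, hδ]
  have : f c < f a := hanti ⟨le_refl a, hac.le⟩ ⟨hac.le, le_refl c⟩ hac
  linarith [hmax a]


theorem statement7 (ε : ℝ) (hε : 0 < ε) (hε1 : ε < 1)
    (P : ℝ → ℝ → ℝ → ℝ)
    (hP : ∀ m T : ℝ, 0 < m → 0 < T →
      IsSolF m T (P m T) ∧ Function.Periodic (P m T) (2 * T)) :
    ∃ Tss : ℝ, 0 < Tss ∧
      ∀ T : ℝ, 0 < T → T < Tss → ∀ m : ℝ, 0 < m → DeltaP ε m T (P m T) < 0 := by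
  refine ⟨ε / 8, by linarith, ?_⟩
  intro T hT0 hTss m hm
  obtain ⟨⟨hC, hD⟩, hper⟩ := hP m T hm hT0
  set Q : ℝ → ℝ := P m T with hQ
  have h2T : (0:ℝ) < 2 * T := by linarith
  -- continuity of auxiliary functions
  have hcsinh : Continuous fun t => Real.sinh (Q t) := Real.continuous_sinh.comp hC
  have hcmsinh : Continuous fun t => m * Real.sinh (Q t) := continuous_const.mul hcsinh
  -- STEP A : global bound |m sinh (Q t)| ≤ 1
  obtain ⟨tmax, htmaxmem, htmax⟩ := isCompact_Icc.exists_isMaxOn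
    (nonempty_Icc.2 h2T.le) hC.continuousOn
  have hmaxglob : ∀ t, Q t ≤ Q tmax := by
    intro t
    obtain ⟨y, hy, hyeq⟩ := hper.exists_mem_Ico₀ h2T t
    rw [hyeq]
    exact isMaxOn_iff.1 htmax y ⟨hy.1, hy.2.le⟩
  obtain ⟨tmin, htminmem, htmin⟩ := isCompact_Icc.exists_isMinOn
    (nonempty_Icc.2 h2T.le) hC.continuousOn
  have hminglob : ∀ t, Q tmin ≤ Q t := by
    intro t
    obtain ⟨y, hy, hyeq⟩ := hper.exists_mem_Ico₀ h2T t
    rw [hyeq]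
    exact isMinOn_iff.1 htmin y ⟨hy.1, hy.2.le⟩
  have hub : m * Real.sinh (Q tmax) ≤ 1 := by
    by_contra h
    push_neg at h
    refine no_max_of_deriv_neg_near hT0 hC hD hmaxglob ?_
    have hev : ∀ᶠ t in nhds tmax, 1 < m * Real.sinh (Q t) :=
      hcmsinh.continuousAt (lt_mem_nhds h)
    filter_upwards [hev] with t ht
    have := squareWave_le_one T t
    linarith
  have hlb : -1 ≤ m * Real.sinh (Q tmin) := by
    by_contra h
    push_neg at h
    refine no_max_of_deriv_neg_near (f := fun t => -Q t)
      (g := fun t => -(2 * (squareWave T t - m * Real.sinh (Q t)))) hT0 hC.neg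
      (fun t ht => (hD t ht).neg) (fun t => neg_le_neg (hminglob t)) ?_
    have hev : ∀ᶠ t in nhds tmin, m * Real.sinh (Q t) < -1 :=
      hcmsinh.continuousAt (gt_mem_nhds h)
    filter_upwards [hev] with t ht
    have := neg_one_le_squareWave T t
    linarith
  have hbnd : ∀ t, |m * Real.sinh (Q t)| ≤ 1 := by
    intro t
    rw [abs_le]
    constructor
    · have h1 : Real.sinh (Q tmin) ≤ Real.sinh (Q t) := Real.sinh_le_sinh.2 (hminglob t)
      nlinarith
    · have h1 : Real.sinh (Q t) ≤ Real.sinh (Q tmax) := Real.sinh_le_sinh.2 (hmaxglob t)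
      nlinarith
  -- STEP B : FTC on the two half-periods
  have hI1 : ∫ t in (0:ℝ)..T, (2 * (1 - m * Real.sinh (Q t))) = Q T - Q 0 := by
    apply intervalIntegral.integral_eq_sub_of_hasDeriv_right_of_le hT0.le hC.continuousOn
    · intro x hx
      have hnm : ∀ k : ℤ, x ≠ (k : ℝ) * T := by
        intro k hk
        rw [hk] at hx
        have hk0 : (0:ℝ) < (k : ℝ) := by
          by_contra hc
          push_neg at hc
          nlinarith [hx.1]
        have hk1 : (1:ℤ) ≤ k := by exact_mod_cast hk0
        have : T ≤ (k : ℝ) * T := by nlinarith [(by exact_mod_cast hk1 : (1:ℝ) ≤ (k:ℝ))]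
        linarith [hx.2]
      have := hD x hnm
      rw [squareWave_pos hT0 hx] at this
      exact this.hasDerivWithinAt
    · exact (continuous_const.mul (continuous_const.sub hcmsinh)).intervalIntegrable _ _
  have hI2 : ∫ t in T..(2*T), (2 * (-1 - m * Real.sinh (Q t))) = Q (2*T) - Q T := by
    apply intervalIntegral.integral_eq_sub_of_hasDeriv_right_of_le (by linarith) hC.continuousOn
    · intro x hx
      have hnm : ∀ k : ℤ, x ≠ (k : ℝ) * T := by
        intro k hk
        rw [hk] at hx
        have hk1 : (1:ℝ) < (k : ℝ) := by
          by_contra hc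
          push_neg at hc
          nlinarith [hx.1]
        have hk2 : (2:ℤ) ≤ k := by exact_mod_cast (by exact_mod_cast hk1 : (1:ℤ) < k)
        have : 2*T ≤ (k : ℝ) * T := by nlinarith [(by exact_mod_cast hk2 : (2:ℝ) ≤ (k:ℝ))]
        linarith [hx.2]
      have := hD x hnm
      rw [squareWave_neg hT0 hx] at this
      exact this.hasDerivWithinAt
    · exact (continuous_const.mul (continuous_const.sub hcmsinh)).intervalIntegrable _ _
  -- rewrite the two integrals
  have hS1 : ∫ t in (0:ℝ)..T, (2 * (1 - m * Real.sinh (Q t)))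
      = 2*T - 2*m * ∫ t in (0:ℝ)..T, Real.sinh (Q t) := by
    have : (fun t => 2 * (1 - m * Real.sinh (Q t)))
        = fun t => (2:ℝ) - (2*m) * Real.sinh (Q t) := by funext t; ring
    rw [this, intervalIntegral.integral_sub (intervalIntegrable_const)
      ((show Continuous fun t => (2*m) * Real.sinh (Q t) from continuous_const.mul hcsinh).intervalIntegrable _ _),
      intervalIntegral.integral_const, intervalIntegral.integral_const_mul]
    simp; ring
  have hS2 : ∫ t in T..(2*T), (2 * (-1 - m * Real.sinh (Q t)))
      = -(2*T) - 2*m * ∫ t in T..(2*T), Real.sinh (Q t) := by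
    have : (fun t => 2 * (-1 - m * Real.sinh (Q t)))
        = fun t => (-2:ℝ) - (2*m) * Real.sinh (Q t) := by funext t; ring
    rw [this, intervalIntegral.integral_sub (intervalIntegrable_const)
      ((show Continuous fun t => (2*m) * Real.sinh (Q t) from continuous_const.mul hcsinh).intervalIntegrable _ _),
      intervalIntegral.integral_const, intervalIntegral.integral_const_mul]
    simp; ring
  have hadd : (∫ t in (0:ℝ)..T, Real.sinh (Q t)) + (∫ t in T..(2*T), Real.sinh (Q t))
      = ∫ t in (0:ℝ)..(2*T), Real.sinh (Q t) :=
    intervalIntegral.integral_add_adjacent_intervals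
      (hcsinh.intervalIntegrable _ _) (hcsinh.intervalIntegrable _ _)
  have hQper : Q (2*T) = Q 0 := by
    have := hper 0
    simpa using this
  have hS : ∫ t in (0:ℝ)..(2*T), Real.sinh (Q t) = 0 := by
    rw [hS1] at hI1
    rw [hS2] at hI2
    have := hQper
    rw [← hadd]
    nlinarith [hI1, hI2, hm]
  -- STEP C : a zero of Q in [0, 2T]
  have hex1 : ∃ s ∈ Icc (0:ℝ) (2*T), Real.sinh (Q s) ≤ 0 := by
    by_contra h
    push_neg at h
    have hpos := intervalIntegral.intervalIntegral_pos_of_pos_on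
      (hcsinh.intervalIntegrable 0 (2*T)) (fun x hx => h x ⟨hx.1.le, hx.2.le⟩) h2T
    rw [hS] at hpos
    exact lt_irrefl _ hpos
  have hex2 : ∃ s ∈ Icc (0:ℝ) (2*T), 0 ≤ Real.sinh (Q s) := by
    by_contra h
    push_neg at h
    have hpos := intervalIntegral.intervalIntegral_pos_of_pos_on
      ((hcsinh.neg).intervalIntegrable 0 (2*T))
      (fun x hx => by simpa using (h x ⟨hx.1.le, hx.2.le⟩)) h2T
    simp only [Pi.neg_apply] at hpos
    rw [intervalIntegral.integral_neg, hS] at hpos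
    simp at hpos
  obtain ⟨s₁, hs₁, hs₁le⟩ := hex1
  obtain ⟨s₂, hs₂, hs₂ge⟩ := hex2
  have hQs₁ : Q s₁ ≤ 0 := Real.sinh_nonpos_iff.1 hs₁le
  have hQs₂ : 0 ≤ Q s₂ := Real.sinh_nonneg_iff.1 hs₂ge
  have h0mem : (0:ℝ) ∈ uIcc (Q s₁) (Q s₂) := by
    rw [Set.mem_uIcc]; left; exact ⟨hQs₁, hQs₂⟩
  obtain ⟨t₀, ht₀mem, ht₀⟩ := intermediate_value_uIcc hC.continuousOn h0mem
  have ht₀Icc : t₀ ∈ Icc (0:ℝ) (2*T) := by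
    have hsub : uIcc s₁ s₂ ⊆ Icc (0:ℝ) (2*T) := by
      rw [Set.uIcc_eq_union]
      exact union_subset (Icc_subset_Icc hs₁.1 hs₂.2) (Icc_subset_Icc hs₂.1 hs₁.2)
    exact hsub ht₀mem
  -- STEP D : Lipschitz bound |Q s| ≤ 8T on [0,2T]
  have hlin : ∀ t : ℝ, HasDerivAt (fun t => (4:ℝ)*t) 4 t := by
    intro t
    simpa using (hasDerivAt_id t).const_mul (4:ℝ)
  have hmono1 : Monotone (fun t => 4*t - Q t) := by
    apply monotone_glue (g := fun t => 4 - 2 * (squareWave T t - m * Real.sinh (Q t))) hT0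
      ((continuous_const.mul continuous_id).sub hC)
      (fun t ht => (hlin t).sub (hD t ht))
    intro t
    have h1 := squareWave_le_one T t
    have h2 := abs_le.1 (hbnd t)
    linarith [h2.1]
  have hmono2 : Monotone (fun t => 4*t + Q t) := by
    apply monotone_glue (g := fun t => 4 + 2 * (squareWave T t - m * Real.sinh (Q t))) hT0
      ((continuous_const.mul continuous_id).add hC)
      (fun t ht => (hlin t).add (hD t ht))
    intro t
    have h1 := neg_one_le_squareWave T t
    have h2 := abs_le.1 (hbnd t)
    linarith [h2.2]
  have hQbnd : ∀ s ∈ Icc (0:ℝ) (2*T), |Q s| ≤ 8*T := by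
    intro s hs
    rw [abs_le]
    rcases le_total t₀ s with h | h
    · have h1 := hmono1 h
      have h2 := hmono2 h
      simp only at h1 h2
      rw [ht₀] at h1 h2
      constructor <;> [skip; skip] <;>
        (first
          | (have := ht₀Icc.1; have := hs.2; linarith)
          | (have := ht₀Icc.1; have := hs.2; linarith))
    · have h1 := hmono1 h
      have h2 := hmono2 h
      simp only at h1 h2
      rw [ht₀] at h1 h2
      constructor <;>
        (have := ht₀Icc.2; have := hs.1; linarith)
  -- STEP E : conclusion
  have hInt : ∀ s ∈ Icc (0:ℝ) (2*T),
      2 * (m * Real.cosh (Q s) - m - ε) ≤ 2 * (8*T - ε) := by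
    intro s hs
    have h1 : Real.cosh (Q s) - 1 ≤ Q s * Real.sinh (Q s) := cosh_sub_one_le _
    have h2 : m * (Real.cosh (Q s) - 1) ≤ m * (Q s * Real.sinh (Q s)) :=
      mul_le_mul_of_nonneg_left h1 hm.le
    have h3 : Q s * (m * Real.sinh (Q s)) ≤ |Q s| * |m * Real.sinh (Q s)| := by
      calc Q s * (m * Real.sinh (Q s)) ≤ |Q s * (m * Real.sinh (Q s))| := le_abs_self _
      _ = |Q s| * |m * Real.sinh (Q s)| := abs_mul _ _
    have h4 : |Q s| * |m * Real.sinh (Q s)| ≤ 8*T * 1 :=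
      mul_le_mul (hQbnd s hs) (hbnd s) (abs_nonneg _) (by linarith)
    have h5 : m * (Q s * Real.sinh (Q s)) = Q s * (m * Real.sinh (Q s)) := by ring
    linarith
  have hci : Continuous fun s => 2 * (m * Real.cosh (Q s) - m - ε) :=
    continuous_const.mul (((continuous_const.mul (Real.continuous_cosh.comp hC)).sub
      continuous_const).sub continuous_const)
  have hIle : (∫ s in (0:ℝ)..(2*T), 2 * (m * Real.cosh (Q s) - m - ε))
      ≤ ∫ _ in (0:ℝ)..(2*T), (2 * (8*T - ε)) :=
    intervalIntegral.integral_mono_on h2T.le (hci.intervalIntegrable _ _)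
      intervalIntegrable_const hInt
  rw [intervalIntegral.integral_const] at hIle
  simp only [smul_eq_mul, sub_zero] at hIle
  unfold DeltaP
  have hpos : (0:ℝ) < 1 / (2*T) := by positivity
  have hmul : (1/(2*T)) * (∫ s in (0:ℝ)..(2*T), 2 * (m * Real.cosh (Q s) - m - ε))
      ≤ (1/(2*T)) * ((2*T) * (2 * (8*T - ε))) :=
    mul_le_mul_of_nonneg_left hIle hpos.le
  have heq : (1/(2*T)) * ((2*T) * (2 * (8*T - ε))) = 2 * (8*T - ε) := by
    field_simp
  have hfin : 2 * (8*T - ε) < 0 := by nlinarith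
  calc (1/(2*T)) * (∫ s in (0:ℝ)..(2*T), 2 * (m * Real.cosh (Q s) - m - ε))
      ≤ 2 * (8*T - ε) := by rw [← heq]; exact hmul
  _ < 0 := hfin
end
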